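/- Let X be a complete metric space and let A ⊂ X be a nonempty subset. Then A is weakly externally 4-hyperconvex in X if and only if A is weakly externally n-hyperconvex in X for every positive integer n. -/

import Mathlib

/-- A subset `A` of a metric space `X` is weakly externally `n`-hyperconvex in `X` if for
every `x ∈ X`, every `r ≥ d(x,A)`, and every family of `n - 1` closed balls
`B(y i, s i)` with `y i ∈ A`, `d(x, y i) ≤ r + s i` and `d(y i, y j) ≤ s i + s j`,
the intersection `A ∩ B(x,r) ∩ ⋂ i, B(y i, s i)` is nonempty. -/
def IsWeaklyExternallyNHyperconvex {X : Type*} [MetricSpace X] (A : Set X) (n : ℕ) : Prop :=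
  ∀ (x : X) (r : ℝ), Metric.infDist x A ≤ r →
    ∀ (y : Fin (n - 1) → X) (s : Fin (n - 1) → ℝ),
      (∀ i, y i ∈ A) →
      (∀ i, dist x (y i) ≤ r + s i) →
      (∀ i j, dist (y i) (y j) ≤ s i + s j) →
      ((A ∩ Metric.closedBall x r) ∩ ⋂ i, Metric.closedBall (y i) (s i)).Nonempty

namespace WEHAux

open Metric Set

variable {X : Type*} [MetricSpace X]

/-- A certified state: a point of `A` together with an admissible radius vector
dominating the target vector `ρ` and realized by `z`. -/
structure GS (A : Set X) {N : ℕ} (c : Fin N → X) (ρ : Fin N → ℝ) where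
  z : X
  f : Fin N → ℝ
  hz : z ∈ A
  h1 : ∀ i, dist z (c i) ≤ f i
  h2 : ∀ i j, dist (c i) (c j) ≤ f i + f j
  h3 : ∀ i, ρ i ≤ f i

lemma hmax1 (x h : ℝ) (hh : 0 ≤ h) : max (x + h) 0 ≤ max x 0 + h := by
  have h1 : x + h ≤ max x 0 + h := by linarith [le_max_left x (0:ℝ)]
  have h2 : (0:ℝ) ≤ max x 0 + h := by
    have := le_max_right x (0:ℝ); linarith
  exact max_le h1 h2

lemma hmax2 (x Y : ℝ) (hY : 0 ≤ Y) : max (max x 0 - Y) 0 ≤ max (x - Y) 0 := by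
  rcases le_total x 0 with hx | hx
  · have : max x 0 = 0 := max_eq_right hx
    rw [this]
    exact max_le (by linarith [le_max_right (x - Y) (0:ℝ)]) (le_max_right _ _)
  · have : max x 0 = x := max_eq_left hx
    rw [this]

/-- enumeration of the complement of a pair in `Fin N` -/
lemma exists_enum {N m : ℕ} (hm : N - 2 = m) (a b : Fin N) (hab : a ≠ b) :
    ∃ e : Fin m → Fin N, (∀ j, e j ≠ a ∧ e j ≠ b) ∧
      (∀ i, i ≠ a → i ≠ b → ∃ j, e j = i) := by
  classical
  set s : Finset (Fin N) := (Finset.univ.erase a).erase b with hs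
  have hb : b ∈ Finset.univ.erase a := Finset.mem_erase.2 ⟨hab.symm, Finset.mem_univ b⟩
  have hcard : s.card = m := by
    rw [hs, Finset.card_erase_of_mem hb, Finset.card_erase_of_mem (Finset.mem_univ a)]
    simp only [Finset.card_univ, Fintype.card_fin]
    omega
  let E := s.equivFinOfCardEq hcard
  refine ⟨fun j => (E.symm j).1, fun j => ?_, fun i hia hib => ?_⟩
  · have h2 : (E.symm j).1 ∈ (Finset.univ.erase a).erase b := (E.symm j).2
    have h3 := Finset.mem_erase.1 h2
    have h4 := Finset.mem_erase.1 h3.2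
    exact ⟨h4.1, h3.1⟩
  · have hi : i ∈ s := by
      rw [hs]
      exact Finset.mem_erase.2 ⟨hib, Finset.mem_erase.2 ⟨hia, Finset.mem_univ i⟩⟩
    exact ⟨E ⟨i, hi⟩, by simp⟩

lemma step {A : Set X} {k : ℕ} {c : Fin (k+1) → X} {ρ : Fin (k+1) → ℝ}
    (hW : IsWeaklyExternallyNHyperconvex A k)
    (hadm : ∀ i j, dist (c i) (c j) ≤ ρ i + ρ j)
    (hc : ∀ i : Fin (k+1), i ≠ 0 → c i ∈ A)
    (hr0 : Metric.infDist (c 0) A ≤ ρ 0)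
    (st : GS A c ρ) (h : ℝ) (hh : 0 ≤ h) (a b : Fin (k+1)) (hab : a ≠ b) :
    ∃ st' : GS A c ρ, dist st.z st'.z ≤ h ∧
      ∀ i, st'.f i = if i = a ∨ i = b then st.f i + h else max (st.f i - h) (ρ i) := by
  classical
  set f' : Fin (k+1) → ℝ :=
    fun i => if i = a ∨ i = b then st.f i + h else max (st.f i - h) (ρ i) with hf'
  have hge : ∀ i, ρ i ≤ f' i := by
    intro i; simp only [f']; split_ifs with hi
    · linarith [st.h3 i]
    · exact le_max_right _ _
  have hfd : ∀ i, st.f i - h ≤ f' i := by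
    intro i; simp only [f']; split_ifs with hi
    · linarith
    · exact le_max_left _ _
  have h2' : ∀ i j, dist (c i) (c j) ≤ f' i + f' j := by
    intro i j
    have hij := st.h2 i j
    have hadmij := hadm i j
    simp only [f']; split_ifs with hi hj hj
    · linarith
    · have := le_max_left (st.f j - h) (ρ j); linarith
    · have := le_max_left (st.f i - h) (ρ i); linarith
    · have := le_max_right (st.f i - h) (ρ i)
      have := le_max_right (st.f j - h) (ρ j)
      linarith
  have hprox : ∀ i, dist st.z (c i) ≤ h + f' i := by
    intro i; have := hfd i; have := st.h1 i; linarith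
  obtain ⟨e, he, hcov⟩ := exists_enum (m := k - 1) (by omega) a b hab
  by_cases h0 : (0 : Fin (k+1)) = a ∨ (0 : Fin (k+1)) = b
  · -- the coordinate 0 is excluded; use the ball around `st.z` as external ball
    have hmem : ∀ j, c (e j) ∈ A := by
      intro j
      refine hc _ ?_
      intro h00
      rcases h0 with h0 | h0
      · exact (he j).1 (h00.trans h0)
      · exact (he j).2 (h00.trans h0)
    obtain ⟨z', hz'⟩ := hW st.z h (by rw [Metric.infDist_zero_of_mem st.hz]; exact hh)
      (fun j => c (e j)) (fun j => f' (e j)) hmem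
      (fun j => hprox (e j)) (fun j j' => h2' _ _)
    obtain ⟨⟨hz'A, hz'prox⟩, hz'balls⟩ := hz'
    have hz'proxd : dist z' st.z ≤ h := Metric.mem_closedBall.1 hz'prox
    refine ⟨⟨z', f', hz'A, ?_, h2', hge⟩, by rw [dist_comm]; exact hz'proxd, fun i => rfl⟩
    intro i
    by_cases hi : i = a ∨ i = b
    · have htri : dist z' (c i) ≤ dist z' st.z + dist st.z (c i) := dist_triangle _ _ _
      have h1i := st.h1 i
      simp only [f', if_pos hi]
      linarith
    · push_neg at hi
      obtain ⟨j, hj⟩ := hcov i hi.1 hi.2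
      have hb := Set.mem_iInter.1 hz'balls j
      rw [hj] at hb
      exact Metric.mem_closedBall.1 hb
  · -- the coordinate 0 is kept; external ball centered at `c 0`
    push_neg at h0
    set w : Fin (k-1) → X := fun j => if e j = 0 then st.z else c (e j) with hw
    set u : Fin (k-1) → ℝ := fun j => if e j = 0 then h else f' (e j) with hu
    have hmem : ∀ j, w j ∈ A := by
      intro j; simp only [w]; split_ifs with hj
      · exact st.hz
      · exact hc _ hj
    have hd : ∀ j, dist (c 0) (w j) ≤ f' 0 + u j := by
      intro j; simp only [w, u]; split_ifs with hj
      · rw [dist_comm]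
        have := hprox 0
        linarith
      · exact h2' 0 (e j)
    have hp : ∀ j j', dist (w j) (w j') ≤ u j + u j' := by
      intro j j'; simp only [w, u]; split_ifs with hj hj' hj'
      · simp [dist_self]; linarith
      · have := hprox (e j'); linarith
      · rw [dist_comm]; have := hprox (e j); linarith
      · exact h2' _ _
    obtain ⟨z', hz'⟩ := hW (c 0) (f' 0) (le_trans hr0 (hge 0)) w u hmem hd hp
    obtain ⟨⟨hz'A, hz'x⟩, hz'balls⟩ := hz'
    obtain ⟨j₀, hj₀⟩ := hcov 0 h0.1 h0.2
    have hz'proxd : dist z' st.z ≤ h := by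
      have hb := Set.mem_iInter.1 hz'balls j₀
      simp only [w, u, hj₀, if_pos] at hb
      exact Metric.mem_closedBall.1 hb
    refine ⟨⟨z', f', hz'A, ?_, h2', hge⟩, by rw [dist_comm]; exact hz'proxd, fun i => rfl⟩
    intro i
    by_cases hi : i = a ∨ i = b
    · have htri : dist z' (c i) ≤ dist z' st.z + dist st.z (c i) := dist_triangle _ _ _
      have h1i := st.h1 i
      simp only [f', if_pos hi]
      linarith
    · push_neg at hi
      by_cases hi0 : i = 0
      · subst hi0
        exact Metric.mem_closedBall.1 hz'x
      · obtain ⟨j, hj⟩ := hcov i hi.1 hi.2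
        have hb := Set.mem_iInter.1 hz'balls j
        have hjne : e j ≠ 0 := by rw [hj]; exact hi0
        simp only [w, u, hjne, if_neg, if_false] at hb
        rw [hj] at hb
        exact Metric.mem_closedBall.1 hb
def uc {N : ℕ} (i : Fin N) (L : List (Fin N × Fin N)) : ℕ :=
  L.countP fun p => decide (i = p.1 ∨ i = p.2)

def dc {N : ℕ} (i : Fin N) (L : List (Fin N × Fin N)) : ℕ :=
  L.countP fun p => !decide (i = p.1 ∨ i = p.2)

lemma uc_cons_pos {N : ℕ} (i : Fin N) (p : Fin N × Fin N) (L : List (Fin N × Fin N))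
    (hi : i = p.1 ∨ i = p.2) : uc i (p :: L) = uc i L + 1 := by
  simp only [uc, List.countP_cons, decide_eq_true_eq, if_pos hi]

lemma uc_cons_neg {N : ℕ} (i : Fin N) (p : Fin N × Fin N) (L : List (Fin N × Fin N))
    (hi : ¬(i = p.1 ∨ i = p.2)) : uc i (p :: L) = uc i L := by
  simp only [uc, List.countP_cons, decide_eq_true_eq, if_neg hi, Nat.add_zero]

lemma dc_cons_pos {N : ℕ} (i : Fin N) (p : Fin N × Fin N) (L : List (Fin N × Fin N))
    (hi : i = p.1 ∨ i = p.2) : dc i (p :: L) = dc i L := by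
  have hb : (!decide (i = p.1 ∨ i = p.2)) = false := by simp [hi]
  simp only [dc, List.countP_cons]
  rw [hb]
  simp

lemma dc_cons_neg {N : ℕ} (i : Fin N) (p : Fin N × Fin N) (L : List (Fin N × Fin N))
    (hi : ¬(i = p.1 ∨ i = p.2)) : dc i (p :: L) = dc i L + 1 := by
  have hb : (!decide (i = p.1 ∨ i = p.2)) = true := by simpa using hi
  simp only [dc, List.countP_cons]
  rw [hb]
  simp

lemma uc_dc_len {N : ℕ} (i : Fin N) (L : List (Fin N × Fin N)) :
    uc i L + dc i L = L.length := by
  induction L with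
  | nil => simp [uc, dc]
  | cons p L ih =>
    by_cases hi : i = p.1 ∨ i = p.2
    · rw [uc_cons_pos _ _ _ hi, dc_cons_pos _ _ _ hi]; simp; omega
    · rw [uc_cons_neg _ _ _ hi, dc_cons_neg _ _ _ hi]; simp; omega

lemma walk {A : Set X} {k : ℕ} {c : Fin (k+1) → X} {ρ : Fin (k+1) → ℝ}
    (hW : IsWeaklyExternallyNHyperconvex A k)
    (hadm : ∀ i j, dist (c i) (c j) ≤ ρ i + ρ j)
    (hc : ∀ i : Fin (k+1), i ≠ 0 → c i ∈ A)
    (hr0 : Metric.infDist (c 0) A ≤ ρ 0)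
    (h : ℝ) (hh : 0 ≤ h)
    (L : List (Fin (k+1) × Fin (k+1))) (hL : ∀ p ∈ L, p.1 ≠ p.2) (st : GS A c ρ) :
    ∃ st' : GS A c ρ, dist st.z st'.z ≤ L.length * h ∧
      ∀ i, st'.f i ≤ ρ i + (max (st.f i - ρ i - dc i L * h) 0 + uc i L * h) := by
  induction L generalizing st with
  | nil =>
    refine ⟨st, by simp, fun i => ?_⟩
    have h3 := st.h3 i
    have hmx := le_max_left (st.f i - ρ i - dc i [] * h) 0
    simp only [dc, uc, List.countP_nil, Nat.cast_zero, zero_mul, sub_zero] at hmx ⊢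
    linarith
  | cons p L ih =>
    obtain ⟨st₁, hd₁, hf₁⟩ := step hW hadm hc hr0 st h hh p.1 p.2 (hL p List.mem_cons_self)
    obtain ⟨st₂, hd₂, hb₂⟩ := ih (fun q hq => hL q (List.mem_cons_of_mem _ hq)) st₁
    refine ⟨st₂, ?_, ?_⟩
    · have htri : dist st.z st₂.z ≤ dist st.z st₁.z + dist st₁.z st₂.z := dist_triangle _ _ _
      have : (List.length (p :: L) : ℝ) * h = h + L.length * h := by
        simp [List.length_cons]; ring
      rw [this]
      linarith
    · intro i
      have hb := hb₂ i
      rw [hf₁ i] at hb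
      by_cases hi : i = p.1 ∨ i = p.2
      · rw [if_pos hi] at hb
        rw [uc_cons_pos _ _ _ hi, dc_cons_pos _ _ _ hi]
        have key : max (st.f i + h - ρ i - dc i L * h) 0
            ≤ max (st.f i - ρ i - dc i L * h) 0 + h := by
          have := hmax1 (st.f i - ρ i - dc i L * h) h hh
          have harg : st.f i + h - ρ i - dc i L * h
              = st.f i - ρ i - dc i L * h + h := by ring
          rw [harg]
          exact this
        have hcast : ((uc i L + 1 : ℕ) : ℝ) * h = uc i L * h + h := by
          push_cast; ring
        rw [hcast]
        linarith
      · rw [if_neg hi] at hb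
        rw [uc_cons_neg _ _ _ hi, dc_cons_neg _ _ _ hi]
        have hsub : max (st.f i - h) (ρ i) - ρ i = max (st.f i - h - ρ i) 0 := by
          rw [← max_sub_sub_right (st.f i - h) (ρ i) (ρ i)]
          simp
        have key : max (max (st.f i - h) (ρ i) - ρ i - dc i L * h) 0
            ≤ max (st.f i - h - ρ i - dc i L * h) 0 := by
          rw [hsub]
          have := hmax2 (st.f i - h - ρ i) (dc i L * h) (by positivity)
          have harg : max (st.f i - h - ρ i) 0 - dc i L * h
              = max (st.f i - h - ρ i) 0 - dc i L * h := rfl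
          exact this
        have hcast : ((dc i L + 1 : ℕ) : ℝ) * h = dc i L * h + h := by
          push_cast; ring
        rw [hcast]
        have harg2 : st.f i - ρ i - (dc i L * h + h) = st.f i - h - ρ i - dc i L * h := by
          ring
        rw [harg2]
        linarith
lemma countP_or_le {α : Type*} (p q : α → Bool) (l : List α) :
    l.countP (fun t => p t || q t) ≤ l.countP p + l.countP q := by
  induction l with
  | nil => simp
  | cons a l ih =>
    simp only [List.countP_cons]
    cases hp : p a <;> cases hq : q a <;> simp <;> omega

lemma countP_eq_le_one {α : Type*} [DecidableEq α] (x : α) (l : List α) (hl : l.Nodup) :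
    l.countP (fun t => decide (x = t)) ≤ 1 := by
  induction l with
  | nil => simp
  | cons a l ih =>
    rw [List.nodup_cons] at hl
    by_cases hx : x = a
    · subst hx
      have h0 : l.countP (fun t => decide (x = t)) = 0 := by
        apply List.countP_eq_zero.2
        intro t ht
        simp only [decide_eq_true_eq]
        intro he
        apply hl.1
        rwa [he]
      rw [List.countP_cons, h0]
      simp
    · simp only [List.countP_cons, decide_eq_true_eq, if_neg hx, Nat.add_zero]
      exact ih hl.2

lemma uc_cycle_le {k : ℕ} (i : Fin (k+1)) :
    uc i ((List.finRange (k+1)).map fun t => (t, t+1)) ≤ 2 := by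
  classical
  rw [uc, List.countP_map]
  have heq : ((fun p : Fin (k+1) × Fin (k+1) => decide (i = p.1 ∨ i = p.2)) ∘
      (fun t : Fin (k+1) => (t, t+1))) = fun t => decide (i = t ∨ i = t + 1) := rfl
  rw [heq]
  have hsplit : (fun t : Fin (k+1) => decide (i = t ∨ i = t + 1)) =
      fun t : Fin (k+1) => (decide (i = t) || decide (i = t + 1)) := by
    funext t
    by_cases h1 : i = t <;> by_cases h2 : i = t + 1 <;> simp [h1, h2]
  rw [hsplit]
  have h1 := countP_or_le (fun t : Fin (k+1) => decide (i = t))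
    (fun t : Fin (k+1) => decide (i = t + 1)) (List.finRange (k+1))
  have h2 : (List.finRange (k+1)).countP (fun t => decide (i = t)) ≤ 1 :=
    countP_eq_le_one i _ (List.nodup_finRange _)
  have h3 : (List.finRange (k+1)).countP (fun t => decide (i = t + 1)) ≤ 1 := by
    have hc : (List.finRange (k+1)).countP (fun t => decide (i = t + 1)) =
        (List.finRange (k+1)).countP (fun t => decide (i - 1 = t)) := by
      apply List.countP_congr
      intro t _
      simp only [decide_eq_true_eq]
      constructor
      · intro hst; rw [hst]; simp
      · intro hst; rw [← hst]; simp
    rw [hc]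
    exact countP_eq_le_one _ _ (List.nodup_finRange _)
  omega

lemma cycle_pairs_ne {k : ℕ} (hk : 1 ≤ k) :
    ∀ p ∈ (List.finRange (k+1)).map (fun t : Fin (k+1) => (t, t+1)), p.1 ≠ p.2 := by
  intro p hp
  simp only [List.mem_map] at hp
  obtain ⟨t, _, rfl⟩ := hp
  simp only [ne_eq]
  intro heq
  have hv := congrArg Fin.val heq
  rw [Fin.val_add_one] at hv
  split_ifs at hv with hlast
  · have : (t : ℕ) = k := by rw [hlast]; rfl
    omega
  · omega

lemma cycle {A : Set X} {k : ℕ} {c : Fin (k+1) → X} {ρ : Fin (k+1) → ℝ} (hk : 4 ≤ k)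
    (hW : IsWeaklyExternallyNHyperconvex A k)
    (hadm : ∀ i j, dist (c i) (c j) ≤ ρ i + ρ j)
    (hc : ∀ i : Fin (k+1), i ≠ 0 → c i ∈ A)
    (hr0 : Metric.infDist (c 0) A ≤ ρ 0)
    (st : GS A c ρ) (E : ℝ) (hE0 : 0 ≤ E) (hE : ∀ i, st.f i ≤ ρ i + E) :
    ∃ st' : GS A c ρ, dist st.z st'.z ≤ 2 * E ∧ ∀ i, st'.f i ≤ ρ i + (2/3) * E := by
  classical
  set h : ℝ := E / ((k:ℝ) - 1) with hh_def
  have hk1 : (3:ℝ) ≤ (k:ℝ) - 1 := by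
    have : (4:ℝ) ≤ (k:ℝ) := by exact_mod_cast hk
    linarith
  have hkpos : (0:ℝ) < (k:ℝ) - 1 := by linarith
  have hh : 0 ≤ h := div_nonneg hE0 (le_of_lt hkpos)
  set L := (List.finRange (k+1)).map (fun t : Fin (k+1) => (t, t+1)) with hL_def
  have hlen : L.length = k + 1 := by simp [hL_def]
  obtain ⟨st', hd, hb⟩ := walk hW hadm hc hr0 h hh L (cycle_pairs_ne (by omega)) st
  refine ⟨st', ?_, ?_⟩
  · rw [hlen] at hd
    have hmov : ((k:ℝ) + 1) * h ≤ 2 * E := by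
      rw [hh_def]
      have h2 : ((k:ℝ)+1) * (E/((k:ℝ)-1)) = ((k:ℝ)+1) * E / ((k:ℝ)-1) := by ring
      rw [h2, div_le_iff₀ hkpos]
      nlinarith [mul_nonneg hE0 (by linarith : (0:ℝ) ≤ (k:ℝ) - 3)]
    have hcast : ((k + 1 : ℕ) : ℝ) = (k:ℝ) + 1 := by push_cast; ring
    rw [hcast] at hd
    linarith
  · intro i
    have hb' := hb i
    have hucle : uc i L ≤ 2 := uc_cycle_le i
    have hdc : k - 1 ≤ dc i L := by
      have := uc_dc_len i L
      rw [hlen] at this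
      omega
    have hdcR : ((k:ℝ) - 1) ≤ (dc i L : ℝ) := by
      have h5 : ((k - 1 : ℕ) : ℝ) ≤ (dc i L : ℝ) := by exact_mod_cast hdc
      rwa [Nat.cast_sub (by omega), Nat.cast_one] at h5
    have hdch : E ≤ (dc i L : ℝ) * h := by
      have h6 : ((k:ℝ) - 1) * h ≤ (dc i L : ℝ) * h := mul_le_mul_of_nonneg_right hdcR hh
      rw [hh_def, mul_div_cancel₀ _ (ne_of_gt hkpos)] at h6
      exact h6
    have hmx : max (st.f i - ρ i - dc i L * h) 0 = 0 := by
      apply max_eq_right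
      have := hE i
      linarith
    rw [hmx] at hb'
    have hucR : (uc i L : ℝ) ≤ 2 := by exact_mod_cast hucle
    have huch : (uc i L : ℝ) * h ≤ 2 * h := mul_le_mul_of_nonneg_right hucR hh
    have h23 : 2 * h ≤ (2/3) * E := by
      have h7 : E / ((k:ℝ)-1) ≤ E / 3 :=
        div_le_div_of_nonneg_left hE0 (by norm_num) hk1
      rw [hh_def]
      linarith
    linarith
lemma reach {A : Set X} [CompleteSpace X] {k : ℕ} {c : Fin (k+1) → X} {ρ : Fin (k+1) → ℝ}
    (hk : 4 ≤ k)
    (hW : IsWeaklyExternallyNHyperconvex A k)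
    (hadm : ∀ i j, dist (c i) (c j) ≤ ρ i + ρ j)
    (hc : ∀ i : Fin (k+1), i ≠ 0 → c i ∈ A)
    (hr0 : Metric.infDist (c 0) A ≤ ρ 0)
    (hclosed : IsClosed A)
    (st₀ : GS A c ρ) (E₀ : ℝ) (hE0 : 0 ≤ E₀) (hE : ∀ i, st₀.f i ≤ ρ i + E₀) :
    ∃ w ∈ A, ∀ i, dist w (c i) ≤ ρ i := by
  classical
  let Q := {q : GS A c ρ × ℝ // 0 ≤ q.2 ∧ ∀ i, q.1.f i ≤ ρ i + q.2}
  let F : Q → Q := fun q =>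
    ⟨(Classical.choose (cycle hk hW hadm hc hr0 q.1.1 q.1.2 q.2.1 q.2.2), (2/3) * q.1.2),
      mul_nonneg (by norm_num) q.2.1,
      fun i => (Classical.choose_spec (cycle hk hW hadm hc hr0 q.1.1 q.1.2 q.2.1 q.2.2)).2 i⟩
  let T : ℕ → Q := fun n => F^[n] ⟨(st₀, E₀), hE0, hE⟩
  have hTsucc : ∀ n, T (n+1) = F (T n) := fun n => Function.iterate_succ_apply' F n _
  have hTE : ∀ n, (T n).1.2 = (2/3)^n * E₀ := by
    intro n
    induction n with
    | zero => simp [T]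
    | succ n ih =>
      rw [hTsucc n]
      show (2/3) * (T n).1.2 = _
      rw [ih]
      ring
  have hTd : ∀ n, dist (T n).1.1.z (T (n+1)).1.1.z ≤ 2 * (T n).1.2 := by
    intro n
    rw [hTsucc n]
    exact (Classical.choose_spec
      (cycle hk hW hadm hc hr0 (T n).1.1 (T n).1.2 (T n).2.1 (T n).2.2)).1
  let u : ℕ → X := fun n => (T n).1.1.z
  have hcauchy : CauchySeq u := by
    apply cauchySeq_of_le_geometric (2/3) (2 * E₀) (by norm_num)
    intro n
    have h5 := hTd n
    rw [hTE n] at h5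
    calc dist (u n) (u (n+1)) ≤ 2 * ((2/3)^n * E₀) := h5
      _ = 2 * E₀ * (2/3)^n := by ring
  obtain ⟨w, hw⟩ := cauchySeq_tendsto_of_complete hcauchy
  refine ⟨w, ?_, ?_⟩
  · exact hclosed.mem_of_tendsto hw (Filter.Eventually.of_forall fun n => (T n).1.1.hz)
  · intro i
    have hbound : ∀ n, dist (u n) (c i) ≤ ρ i + (2/3)^n * E₀ := by
      intro n
      have h1 := (T n).1.1.h1 i
      have h2 := (T n).2.2 i
      rw [hTE n] at h2
      exact le_trans h1 h2
    have hlim1 : Filter.Tendsto (fun n => dist (u n) (c i)) Filter.atTop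
        (nhds (dist w (c i))) := hw.dist tendsto_const_nhds
    have hlim2 : Filter.Tendsto (fun n : ℕ => ρ i + (2/3:ℝ)^n * E₀) Filter.atTop
        (nhds (ρ i)) := by
      have h3 : Filter.Tendsto (fun n : ℕ => ((2:ℝ)/3)^n * E₀) Filter.atTop (nhds 0) := by
        have h4 := (tendsto_pow_atTop_nhds_zero_of_lt_one
          (by norm_num : (0:ℝ) ≤ 2/3) (by norm_num)).mul_const E₀
        simpa using h4
      have h6 : Filter.Tendsto (fun _ : ℕ => ρ i) Filter.atTop (nhds (ρ i)) :=
        tendsto_const_nhds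
      have h7 := h6.add h3
      simpa using h7
    exact le_of_tendsto_of_tendsto' hlim1 hlim2 hbound
lemma closed_of_four {A : Set X} (hA : A.Nonempty)
    (h4 : IsWeaklyExternallyNHyperconvex A 4) : IsClosed A := by
  have hsub : closure A ⊆ A := by
    intro x hx
    have h0 : Metric.infDist x A = 0 := (Metric.mem_closure_iff_infDist_zero hA).1 hx
    obtain ⟨a, ha⟩ := hA
    obtain ⟨z, hz⟩ := h4 x 0 (le_of_eq h0) (fun _ => a) (fun _ => dist x a)
      (fun _ => ha) (fun _ => by simp) (fun _ _ => by simp [dist_self])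
    obtain ⟨⟨hzA, hzx⟩, -⟩ := hz
    have hd : dist z x ≤ 0 := Metric.mem_closedBall.1 hzx
    have hzx0 : z = x := by
      have h1 : (0:ℝ) ≤ dist z x := dist_nonneg
      have h2 : dist z x = 0 := le_antisymm hd h1
      exact dist_eq_zero.1 h2
    rwa [← hzx0]
  exact isClosed_of_closure_subset hsub

lemma pad {A : Set X} (hA : A.Nonempty) (h4 : IsWeaklyExternallyNHyperconvex A 4)
    {n : ℕ} (hn : n ≤ 4) : IsWeaklyExternallyNHyperconvex A n := by
  classical
  intro x r hr y s hy hxy hyy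
  have hrnn : (0:ℝ) ≤ r := le_trans Metric.infDist_nonneg hr
  by_cases h1 : n ≤ 1
  · obtain ⟨a, ha⟩ := hA
    obtain ⟨z, hz⟩ := h4 x r hr (fun _ => a) (fun _ => dist x a) (fun _ => ha)
      (fun _ => by simp; linarith) (fun _ _ => by simp [dist_self])
    refine ⟨z, ⟨hz.1, ?_⟩⟩
    rw [Set.mem_iInter]
    intro i
    exact absurd i.isLt (by omega)
  · push_neg at h1
    set i₀ : Fin (n-1) := ⟨0, by omega⟩ with hi₀
    set y' : Fin 3 → X := fun j => if hj : (j : ℕ) < n - 1 then y ⟨j, hj⟩ else y i₀ with hy'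
    set s' : Fin 3 → ℝ := fun j => if hj : (j : ℕ) < n - 1 then s ⟨j, hj⟩ else s i₀ with hs'
    have hmem : ∀ j, y' j ∈ A := by
      intro j; rw [hy']; dsimp only; split_ifs <;> exact hy _
    have hxy' : ∀ j, dist x (y' j) ≤ r + s' j := by
      intro j; rw [hy', hs']; dsimp only; split_ifs <;> exact hxy _
    have hyy' : ∀ j j', dist (y' j) (y' j') ≤ s' j + s' j' := by
      intro j j'; rw [hy', hs']; dsimp only; split_ifs <;> exact hyy _ _
    obtain ⟨z, hz⟩ := h4 x r hr y' s' hmem hxy' hyy'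
    refine ⟨z, ⟨hz.1, ?_⟩⟩
    rw [Set.mem_iInter]
    intro i
    have hilt : (i : ℕ) < 3 := by have := i.isLt; omega
    have hb := Set.mem_iInter.1 hz.2 ⟨(i : ℕ), hilt⟩
    have hyi : y' ⟨(i : ℕ), hilt⟩ = y i := by
      rw [hy']; dsimp only
      rw [dif_pos i.isLt]
    have hsi : s' ⟨(i : ℕ), hilt⟩ = s i := by
      rw [hs']; dsimp only
      rw [dif_pos i.isLt]
    rwa [hyi, hsi] at hb

lemma succ_step {A : Set X} [CompleteSpace X] {k : ℕ} (hk : 4 ≤ k)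
    (hclosed : IsClosed A)
    (hW : IsWeaklyExternallyNHyperconvex A k) :
    IsWeaklyExternallyNHyperconvex A (k+1) := by
  intro x r hr y s hy hxy hyy
  have hk1 : 1 ≤ k := by omega
  set c : Fin (k+1) → X := Fin.cases x y with hc_def
  set ρ : Fin (k+1) → ℝ := Fin.cases r s with hρ_def
  have hrnn : (0:ℝ) ≤ r := le_trans Metric.infDist_nonneg hr
  have hsnn : ∀ i, 0 ≤ s i := by
    intro i
    have := hyy i i
    simp [dist_self] at this
    linarith
  have hadm : ∀ i j, dist (c i) (c j) ≤ ρ i + ρ j := by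
    intro i j
    induction i using Fin.cases with
    | zero =>
      induction j using Fin.cases with
      | zero => simp [hc_def, hρ_def, dist_self]; linarith
      | succ j =>
        simp only [hc_def, hρ_def, Fin.cases_zero, Fin.cases_succ]
        exact hxy j
    | succ i =>
      induction j using Fin.cases with
      | zero =>
        rw [dist_comm]
        simp only [hc_def, hρ_def, Fin.cases_zero, Fin.cases_succ]
        have := hxy i
        linarith
      | succ j =>
        simp only [hc_def, hρ_def, Fin.cases_succ]
        exact hyy i j
  have hcA : ∀ i : Fin (k+1), i ≠ 0 → c i ∈ A := by
    intro i hi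
    induction i using Fin.cases with
    | zero => exact absurd rfl hi
    | succ i => simpa [hc_def] using hy i
  have hr0 : Metric.infDist (c 0) A ≤ ρ 0 := by simpa [hc_def, hρ_def] using hr
  set j₀ : Fin (k + 1 - 1) := ⟨0, by omega⟩ with hj₀
  set i1 : Fin (k+1) := j₀.succ with hi1
  have hc1 : c i1 = y j₀ := by simp [hc_def, hi1]
  have hρ1 : ρ i1 = s j₀ := by simp [hρ_def, hi1]
  let st₀ : GS A c ρ :=
    { z := y j₀
      f := fun i => max (dist (y j₀) (c i)) (ρ i)
      hz := hy j₀
      h1 := fun i => le_max_left _ _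
      h2 := by
        intro i j
        calc dist (c i) (c j) ≤ dist (c i) (y j₀) + dist (y j₀) (c j) := dist_triangle _ _ _
          _ ≤ _ := by
            have hm1 := le_max_left (dist (y j₀) (c i)) (ρ i)
            have hm2 := le_max_left (dist (y j₀) (c j)) (ρ j)
            rw [dist_comm (c i) (y j₀)]
            exact add_le_add hm1 hm2
      h3 := fun i => le_max_right _ _ }
  have hE : ∀ i, st₀.f i ≤ ρ i + s j₀ := by
    intro i
    have hd : dist (y j₀) (c i) ≤ ρ i + s j₀ := by
      have h7 := hadm i1 i
      rw [hc1, hρ1] at h7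
      linarith
    exact max_le hd (by linarith [hsnn j₀])
  obtain ⟨w, hwA, hwd⟩ := reach hk hW hadm hcA hr0 hclosed st₀ (s j₀) (hsnn j₀) hE
  refine ⟨w, ⟨⟨hwA, ?_⟩, ?_⟩⟩
  · rw [Metric.mem_closedBall]
    have := hwd 0
    simpa [hc_def, hρ_def] using this
  · rw [Set.mem_iInter]
    intro i
    rw [Metric.mem_closedBall]
    have := hwd i.succ
    simpa [hc_def, hρ_def] using this

end WEHAux

theorem isWeaklyExternallyNHyperconvex_four_iff_forall (X : Type*) [MetricSpace X]
    [CompleteSpace X] (A : Set X) (hA : A.Nonempty) :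
    IsWeaklyExternallyNHyperconvex A 4 ↔
      ∀ n : ℕ, 0 < n → IsWeaklyExternallyNHyperconvex A n := by
  constructor
  · intro h4 n hn
    rcases le_or_gt n 4 with h | h
    · exact WEHAux.pad hA h4 h
    · have hclosed := WEHAux.closed_of_four hA h4
      have key : ∀ m, 4 ≤ m → IsWeaklyExternallyNHyperconvex A m := by
        intro m hm
        induction m, hm using Nat.le_induction with
        | base => exact h4
        | succ m hm ih => exact WEHAux.succ_step hm hclosed ih
      exact key n (by omega)
  · intro h
    exact h 4 (by norm_num)
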